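/- Let G and H be connected graphs. Then PI_w(G × H) = |V(G)|² PI_w(H) + |V(H)|² PI_w(G) + 4(|V(G)||E(G)| PI_v(H) + |V(H)||E(H)| PI_v(G)), where G × H is the Cartesian product. -/

import Mathlib

open Finset
open scoped Classical

/-- Number of vertices strictly closer to `u` than to `v`. -/
noncomputable def ncl {V : Type*} [Fintype V] (G : SimpleGraph V) (u v : V) : ℕ :=
  (Finset.univ.filter fun x => G.dist x u < G.dist x v).card

/-- Weighted vertex PI index: each edge `uv` contributes
`(deg u + deg v) * (n_u(e) + n_v(e))`; each edge is counted twice in the double sum. -/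
noncomputable def PIw {V : Type*} [Fintype V] (G : SimpleGraph V) : ℝ :=
  (∑ u, ∑ v, if G.Adj u v then
    (((G.degree u + G.degree v : ℕ) : ℝ) * ((ncl G u v + ncl G v u : ℕ) : ℝ)) else 0) / 2

/-- Vertex PI index. -/
noncomputable def PIv {V : Type*} [Fintype V] (G : SimpleGraph V) : ℝ :=
  (∑ u, ∑ v, if G.Adj u v then ((ncl G u v + ncl G v u : ℕ) : ℝ) else 0) / 2

set_option linter.unusedSectionVars false

namespace SimpleGraph

variable {V W : Type*} [Fintype V] [Fintype W] {G : SimpleGraph V} {H : SimpleGraph W}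

lemma boxProd_dist_le (hG : G.Connected) (hH : H.Connected) (a c : V) (b d : W) :
    (G.boxProd H).dist (a, b) (c, d) ≤ G.dist a c + H.dist b d := by
  obtain ⟨p, hp⟩ := hG.exists_walk_length_eq_dist a c
  obtain ⟨q, hq⟩ := hH.exists_walk_length_eq_dist b d
  calc (G.boxProd H).dist (a, b) (c, d) ≤ ((p.boxProdLeft H b).append (q.boxProdRight G c)).length :=
        dist_le _
    _ = G.dist a c + H.dist b d := by
        rw [Walk.length_append, Walk.boxProdLeft, Walk.boxProdRight]
        exact congrArg₂ (· + ·) ((Walk.length_map _ p).trans hp) ((Walk.length_map _ q).trans hq)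

lemma le_boxProd_walk (hG : G.Connected) (hH : H.Connected) :
    ∀ {x y : V × W} (w : (G.boxProd H).Walk x y),
      G.dist x.1 y.1 + H.dist x.2 y.2 ≤ w.length := by
  intro x y w
  induction w with
  | nil => simp
  | @cons u z y h p ih =>
    rw [Walk.length_cons]
    rcases (boxProd_adj.mp h) with ⟨hadj, h2⟩ | ⟨hadj, heq⟩
    · have h1 : G.dist u.1 y.1 ≤ G.dist z.1 y.1 + 1 := by
        calc G.dist u.1 y.1 ≤ G.dist u.1 z.1 + G.dist z.1 y.1 := hG.dist_triangle
          _ ≤ G.dist z.1 y.1 + 1 := by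
              rw [add_comm]
              exact Nat.add_le_add_left (le_of_eq (dist_eq_one_iff_adj.mpr hadj)) _
      have h2' : H.dist u.2 y.2 = H.dist z.2 y.2 := by rw [h2]
      omega
    · have h1 : H.dist u.2 y.2 ≤ H.dist z.2 y.2 + 1 := by
        calc H.dist u.2 y.2 ≤ H.dist u.2 z.2 + H.dist z.2 y.2 := hH.dist_triangle
          _ ≤ H.dist z.2 y.2 + 1 := by
              rw [add_comm]
              exact Nat.add_le_add_left (le_of_eq (dist_eq_one_iff_adj.mpr hadj)) _
      have h2' : G.dist u.1 y.1 = G.dist z.1 y.1 := by rw [heq]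
      omega

lemma boxProd_dist (hG : G.Connected) (hH : H.Connected) (a c : V) (b d : W) :
    (G.boxProd H).dist (a, b) (c, d) = G.dist a c + H.dist b d := by
  refine le_antisymm (boxProd_dist_le hG hH a c b d) ?_
  obtain ⟨w, hw⟩ := ((hG.boxProd hH).exists_walk_length_eq_dist (a, b) (c, d))
  simpa [hw] using le_boxProd_walk hG hH w

lemma ncl_boxProd_snd (hG : G.Connected) (hH : H.Connected) (a : V) (b d : W) :
    ncl (G.boxProd H) (a, b) (a, d) = Fintype.card V * ncl H b d := by
  unfold ncl
  have h : (univ.filter fun x : V × W =>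
      (G.boxProd H).dist x (a, b) < (G.boxProd H).dist x (a, d))
      = univ ×ˢ (univ.filter fun y : W => H.dist y b < H.dist y d) := by
    ext ⟨x1, x2⟩
    simp [boxProd_dist hG hH, Finset.mem_product]
  rw [h, Finset.card_product, Finset.card_univ]

lemma ncl_boxProd_fst (hG : G.Connected) (hH : H.Connected) (a c : V) (b : W) :
    ncl (G.boxProd H) (a, b) (c, b) = Fintype.card W * ncl G a c := by
  unfold ncl
  have h : (univ.filter fun x : V × W =>
      (G.boxProd H).dist x (a, b) < (G.boxProd H).dist x (c, b))
      = (univ.filter fun y : V => G.dist y a < G.dist y c) ×ˢ univ := by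
    ext ⟨x1, x2⟩
    simp [boxProd_dist hG hH, Finset.mem_product]
  rw [h, Finset.card_product, Finset.card_univ, mul_comm]

end SimpleGraph

lemma sum_ite_const' {α : Type*} [Fintype α] (P : Prop) [Decidable P] (F : α → ℝ) :
    (∑ a : α, if P then F a else 0) = if P then ∑ a : α, F a else 0 := by
  by_cases h : P <;> simp [h]

theorem PIw_boxProd {V W : Type*} [Fintype V] [Fintype W]
    (G : SimpleGraph V) (H : SimpleGraph W) (hG : G.Connected) (hH : H.Connected) :
    PIw (G.boxProd H) =
      (Fintype.card V : ℝ) ^ 2 * PIw H + (Fintype.card W : ℝ) ^ 2 * PIw G +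
      4 * ((Fintype.card V : ℝ) * (G.edgeFinset.card : ℝ) * PIv H +
           (Fintype.card W : ℝ) * (H.edgeFinset.card : ℝ) * PIv G) := by
  classical
  set CV : ℝ := (Fintype.card V : ℝ) with hCV
  set CW : ℝ := (Fintype.card W : ℝ) with hCW
  set EG : ℝ := (G.edgeFinset.card : ℝ) with hEG
  set EH : ℝ := (H.edgeFinset.card : ℝ) with hEH
  have hdegG : ∑ a : V, (G.degree a : ℝ) = 2 * EG := by
    rw [hEG, ← Nat.cast_sum]
    norm_cast
    exact G.sum_degrees_eq_twice_card_edges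
  have hdegH : ∑ b : W, (H.degree b : ℝ) = 2 * EH := by
    rw [hEH, ← Nat.cast_sum]
    norm_cast
    exact H.sum_degrees_eq_twice_card_edges
  have hdeg : ∀ (x : V × W) (inst : Fintype ((G.boxProd H).neighborSet x)),
      @SimpleGraph.degree _ (G.boxProd H) x inst = G.degree x.1 + H.degree x.2 := by
    intro x inst
    rw [Subsingleton.elim inst (SimpleGraph.boxProdFintypeNeighborSet x)]
    clear inst
    exact SimpleGraph.degree_boxProd x
  have expand : PIw (G.boxProd H) =
      ((∑ a : V, ∑ b : W, ∑ c : V, ∑ d : W,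
        (if a = c ∧ H.Adj b d then
            (2 * (G.degree a : ℝ) + ((H.degree b + H.degree d : ℕ) : ℝ)) *
              (CV * ((ncl H b d + ncl H d b : ℕ) : ℝ)) else 0))
      + (∑ a : V, ∑ b : W, ∑ c : V, ∑ d : W,
        (if b = d ∧ G.Adj a c then
            (2 * (H.degree b : ℝ) + ((G.degree a + G.degree c : ℕ) : ℝ)) *
              (CW * ((ncl G a c + ncl G c a : ℕ) : ℝ)) else 0))) / 2 := by
    rw [PIw]
    congr 1
    rw [Fintype.sum_prod_type]
    simp only [Fintype.sum_prod_type]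
    rw [← Finset.sum_add_distrib]
    simp only [← Finset.sum_add_distrib]
    refine Finset.sum_congr rfl fun a _ => Finset.sum_congr rfl fun b _ =>
      Finset.sum_congr rfl fun c _ => Finset.sum_congr rfl fun d _ => ?_
    by_cases hadj : (G.boxProd H).Adj (a, b) (c, d)
    · rw [if_pos hadj]
      rcases SimpleGraph.boxProd_adj.mp hadj with ⟨hGadj, h2⟩ | ⟨hHadj, h2⟩
      · simp only at hGadj h2
        subst h2
        rw [if_neg (by rintro ⟨rfl, hbb⟩; exact hGadj.ne rfl), if_pos ⟨rfl, hGadj⟩]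
        rw [SimpleGraph.ncl_boxProd_fst hG hH a c b, SimpleGraph.ncl_boxProd_fst hG hH c a b, hdeg, hdeg]
        push_cast
        ring
      · simp only at hHadj h2
        subst h2
        rw [if_pos ⟨rfl, hHadj⟩, if_neg (by rintro ⟨rfl, haa⟩; exact hHadj.ne rfl)]
        rw [SimpleGraph.ncl_boxProd_snd hG hH a b d, SimpleGraph.ncl_boxProd_snd hG hH a d b, hdeg, hdeg]
        push_cast
        ring
    · rw [if_neg hadj, if_neg, if_neg]
      · simp
      · rintro ⟨rfl, hGadj⟩
        exact hadj (SimpleGraph.boxProd_adj.mpr (Or.inl ⟨hGadj, rfl⟩))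
      · rintro ⟨rfl, hHadj⟩
        exact hadj (SimpleGraph.boxProd_adj.mpr (Or.inr ⟨hHadj, rfl⟩))
  -- first term
  have T1 : (∑ a : V, ∑ b : W, ∑ c : V, ∑ d : W,
        (if a = c ∧ H.Adj b d then
            (2 * (G.degree a : ℝ) + ((H.degree b + H.degree d : ℕ) : ℝ)) *
              (CV * ((ncl H b d + ncl H d b : ℕ) : ℝ)) else 0))
      = 4 * EG * CV * (∑ b : W, ∑ d : W,
          if H.Adj b d then ((ncl H b d + ncl H d b : ℕ) : ℝ) else 0)
        + CV ^ 2 * (∑ b : W, ∑ d : W,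
          if H.Adj b d then ((H.degree b + H.degree d : ℕ) : ℝ) *
            ((ncl H b d + ncl H d b : ℕ) : ℝ) else 0) := by
    have step1 : ∀ (a : V) (b : W),
        (∑ c : V, ∑ d : W, if a = c ∧ H.Adj b d then
            (2 * (G.degree a : ℝ) + ((H.degree b + H.degree d : ℕ) : ℝ)) *
              (CV * ((ncl H b d + ncl H d b : ℕ) : ℝ)) else 0)
        = ∑ d : W, if H.Adj b d then
            (2 * (G.degree a : ℝ) + ((H.degree b + H.degree d : ℕ) : ℝ)) *
              (CV * ((ncl H b d + ncl H d b : ℕ) : ℝ)) else 0 := by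
      intro a b
      rw [Finset.sum_comm]
      refine Finset.sum_congr rfl fun d _ => ?_
      simp [ite_and]
    simp only [step1]
    rw [Finset.sum_comm]
    have step2 : ∀ (b d : W),
        (∑ a : V, if H.Adj b d then
            (2 * (G.degree a : ℝ) + ((H.degree b + H.degree d : ℕ) : ℝ)) *
              (CV * ((ncl H b d + ncl H d b : ℕ) : ℝ)) else 0)
        = 4 * EG * CV * (if H.Adj b d then ((ncl H b d + ncl H d b : ℕ) : ℝ) else 0)
          + CV ^ 2 * (if H.Adj b d then ((H.degree b + H.degree d : ℕ) : ℝ) *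
              ((ncl H b d + ncl H d b : ℕ) : ℝ) else 0) := by
      intro b d
      rw [sum_ite_const']
      by_cases h : H.Adj b d
      · simp only [if_pos h]
        rw [← Finset.sum_mul, Finset.sum_add_distrib, ← Finset.mul_sum, hdegG,
          Finset.sum_const, Finset.card_univ, nsmul_eq_mul]
        rw [← hCV]
        ring
      · simp [h]
    have : ∀ b : W, (∑ a : V, ∑ d : W, if H.Adj b d then
            (2 * (G.degree a : ℝ) + ((H.degree b + H.degree d : ℕ) : ℝ)) *
              (CV * ((ncl H b d + ncl H d b : ℕ) : ℝ)) else 0)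
        = ∑ d : W, (4 * EG * CV * (if H.Adj b d then ((ncl H b d + ncl H d b : ℕ) : ℝ) else 0)
          + CV ^ 2 * (if H.Adj b d then ((H.degree b + H.degree d : ℕ) : ℝ) *
              ((ncl H b d + ncl H d b : ℕ) : ℝ) else 0)) := by
      intro b
      rw [Finset.sum_comm]
      exact Finset.sum_congr rfl fun d _ => step2 b d
    simp only [this, Finset.sum_add_distrib, ← Finset.mul_sum]
  -- second term
  have T2 : (∑ a : V, ∑ b : W, ∑ c : V, ∑ d : W,
        (if b = d ∧ G.Adj a c then
            (2 * (H.degree b : ℝ) + ((G.degree a + G.degree c : ℕ) : ℝ)) *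
              (CW * ((ncl G a c + ncl G c a : ℕ) : ℝ)) else 0))
      = 4 * EH * CW * (∑ a : V, ∑ c : V,
          if G.Adj a c then ((ncl G a c + ncl G c a : ℕ) : ℝ) else 0)
        + CW ^ 2 * (∑ a : V, ∑ c : V,
          if G.Adj a c then ((G.degree a + G.degree c : ℕ) : ℝ) *
            ((ncl G a c + ncl G c a : ℕ) : ℝ) else 0) := by
    have step1 : ∀ (a : V) (b : W),
        (∑ c : V, ∑ d : W, if b = d ∧ G.Adj a c then
            (2 * (H.degree b : ℝ) + ((G.degree a + G.degree c : ℕ) : ℝ)) *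
              (CW * ((ncl G a c + ncl G c a : ℕ) : ℝ)) else 0)
        = ∑ c : V, if G.Adj a c then
            (2 * (H.degree b : ℝ) + ((G.degree a + G.degree c : ℕ) : ℝ)) *
              (CW * ((ncl G a c + ncl G c a : ℕ) : ℝ)) else 0 := by
      intro a b
      refine Finset.sum_congr rfl fun c _ => ?_
      simp [ite_and]
    simp only [step1]
    have step2 : ∀ (a c : V),
        (∑ b : W, if G.Adj a c then
            (2 * (H.degree b : ℝ) + ((G.degree a + G.degree c : ℕ) : ℝ)) *
              (CW * ((ncl G a c + ncl G c a : ℕ) : ℝ)) else 0)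
        = 4 * EH * CW * (if G.Adj a c then ((ncl G a c + ncl G c a : ℕ) : ℝ) else 0)
          + CW ^ 2 * (if G.Adj a c then ((G.degree a + G.degree c : ℕ) : ℝ) *
              ((ncl G a c + ncl G c a : ℕ) : ℝ) else 0) := by
      intro a c
      rw [sum_ite_const']
      by_cases h : G.Adj a c
      · simp only [if_pos h]
        rw [← Finset.sum_mul, Finset.sum_add_distrib, ← Finset.mul_sum, hdegH,
          Finset.sum_const, Finset.card_univ, nsmul_eq_mul]
        rw [← hCW]
        ring
      · simp [h]
    have swap : ∀ a : V, (∑ b : W, ∑ c : V, if G.Adj a c then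
            (2 * (H.degree b : ℝ) + ((G.degree a + G.degree c : ℕ) : ℝ)) *
              (CW * ((ncl G a c + ncl G c a : ℕ) : ℝ)) else 0)
        = ∑ c : V, (4 * EH * CW * (if G.Adj a c then ((ncl G a c + ncl G c a : ℕ) : ℝ) else 0)
          + CW ^ 2 * (if G.Adj a c then ((G.degree a + G.degree c : ℕ) : ℝ) *
              ((ncl G a c + ncl G c a : ℕ) : ℝ) else 0)) := by
      intro a
      rw [Finset.sum_comm]
      exact Finset.sum_congr rfl fun c _ => step2 a c
    simp only [swap, Finset.sum_add_distrib, ← Finset.mul_sum]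
  rw [expand, T1, T2, PIw, PIw, PIv, PIv]
  ring
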